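/- Let 0 < p_1 < p_2 < ... < p_n and 0 < q_1 < q_2 < ... < q_n be two n-tuples of positive real numbers with p_i ≠ q_j for all i, j, and let r be a positive real number different from 1, 2, ..., n-1. Then the n × n matrix with (i,j) entry (p_i^r - q_j^r)/(p_i - q_j) is nonsingular. -/

import Mathlib

open Matrix

/-- The Loewner matrix `L_r` associated with points `p 0, ..., p (n-1)` and exponent `r`:
its `(i,j)` entry is `(p i ^ r - p j ^ r) / (p i - p j)` for `i ≠ j` and `r * p i ^ (r-1)`
for `i = j` (powers are real powers `Real.rpow`). -/
noncomputable def loewner {n : ℕ} (p : Fin n → ℝ) (r : ℝ) : Matrix (Fin n) (Fin n) ℝ :=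
  Matrix.of fun i j => if i = j then r * p i ^ (r - 1) else (p i ^ r - p j ^ r) / (p i - p j)

open Polynomial Finset


/-- Rolle between consecutive zeros: from `m+1` increasing positive zeros of `f`,
produce `m` increasing positive zeros of `f'`. -/
lemma rolle_tuple {m : ℕ} {f f' : ℝ → ℝ}
    (hder : ∀ x : ℝ, 0 < x → HasDerivAt f (f' x) x)
    (z : Fin (m + 1) → ℝ) (hz : StrictMono z) (hzpos : ∀ j, 0 < z j)
    (hzero : ∀ j, f (z j) = 0) :
    ∃ w : Fin m → ℝ, StrictMono w ∧ (∀ j, 0 < w j) ∧ ∀ j, f' (w j) = 0 := by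
  have key : ∀ j : Fin m, ∃ c ∈ Set.Ioo (z j.castSucc) (z j.succ), f' c = 0 := by
    intro j
    have hlt : z j.castSucc < z j.succ := hz Fin.castSucc_lt_succ
    refine exists_hasDerivAt_eq_zero hlt ?_ ((hzero _).trans (hzero _).symm) ?_
    · intro x hx
      have hx0 : 0 < x := lt_of_lt_of_le (hzpos _) hx.1
      exact ((hder x hx0).continuousAt).continuousWithinAt
    · intro x hx
      exact hder x (lt_trans (hzpos _) hx.1)
  choose w hw hw0 using key
  refine ⟨w, ?_, ?_, hw0⟩
  · intro j j' hjj'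
    have h1 : w j < z j.succ := (hw j).2
    have h2 : z j'.castSucc < w j' := (hw j').1
    have h3 : z j.succ ≤ z j'.castSucc := by
      apply hz.monotone
      rw [Fin.le_def]
      simpa using hjj'
    linarith
  · intro j
    exact lt_trans (hzpos _) (hw j).1

/-- Generalized Descartes rule: if `∑ i, c i * x ^ e i` (real powers, distinct
exponents) vanishes at `m` distinct positive points, all coefficients are zero. -/
lemma descartes : ∀ (m : ℕ) (c e : Fin m → ℝ), Function.Injective e →
    ∀ z : Fin m → ℝ, StrictMono z → (∀ j, 0 < z j) →
    (∀ j, ∑ i, c i * z j ^ e i = 0) → ∀ i, c i = 0 := by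
  intro m
  induction m with
  | zero => intro c e _ z _ _ _ i; exact absurd i.pos (by simp)
  | succ m ih =>
    intro c e he z hz hzpos hzero
    -- f(x) = ∑ c i * x ^ (e i - e 0), same zeros as original for x > 0
    set f : ℝ → ℝ := fun x => ∑ i, c i * x ^ (e i - e 0) with hf
    set f' : ℝ → ℝ := fun x => ∑ i, c i * ((e i - e 0) * x ^ (e i - e 0 - 1)) with hf'
    have hder : ∀ x : ℝ, 0 < x → HasDerivAt f (f' x) x := by
      intro x hx
      exact HasDerivAt.fun_sum fun i _ =>
        (Real.hasDerivAt_rpow_const (Or.inl hx.ne')).const_mul (c i)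
    have hfz : ∀ j, f (z j) = 0 := by
      intro j
      have hzj := hzpos j
      have : f (z j) = (∑ i, c i * z j ^ e i) / z j ^ e 0 := by
        rw [Finset.sum_div]
        refine Finset.sum_congr rfl fun i _ => ?_
        rw [Real.rpow_sub hzj, mul_div_assoc]
      rw [this, hzero, zero_div]
    obtain ⟨w, hw, hwpos, hwzero⟩ := rolle_tuple hder z hz hzpos hfz
    have hsucc : ∀ i : Fin m, c i.succ = 0 := by
      have := ih (fun i => c i.succ * (e i.succ - e 0)) (fun i => e i.succ - e 0 - 1)
        (fun i i' h => by
          simp only at h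
          have : e i.succ = e i'.succ := by linarith
          exact Fin.succ_injective _ (he this))
        w hw hwpos
        (fun j => by
          have h0 := hwzero j
          simp only [hf'] at h0
          rw [Fin.sum_univ_succ] at h0
          simp only [sub_self, zero_mul, mul_zero, zero_add] at h0
          rw [← h0]
          exact Finset.sum_congr rfl fun i _ => by ring)
      intro i
      have h := this i
      rcases mul_eq_zero.mp h with h' | h'
      · exact h'
      · exact absurd (he (by linarith : e i.succ = e 0)) (Fin.succ_ne_zero i)
    have h0 := hzero 0
    rw [Fin.sum_univ_succ] at h0
    simp only [hsucc, zero_mul, Finset.sum_const_zero, add_zero] at h0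
    have hpow : (0:ℝ) < z 0 ^ e 0 := Real.rpow_pos_of_pos (hzpos 0) _
    have hc0 : c 0 = 0 := by
      rcases mul_eq_zero.mp h0 with h' | h'
      · exact h'
      · exact absurd h' hpow.ne'
    intro i
    refine Fin.cases hc0 hsucc i

/-- For `0 < p 0 < ⋯ < p (n-1)` and `0 < q 0 < ⋯ < q (n-1)` with `p i ≠ q j` for all
`i, j`, and `r > 0` different from `1, 2, …, n-1`, the matrix with entries
`(p i ^ r - q j ^ r) / (p i - q j)` is nonsingular. -/
theorem loewner_two_tuples_nonsingular {n : ℕ} (p q : Fin n → ℝ)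
    (hp : ∀ i, 0 < p i) (hq : ∀ i, 0 < q i)
    (hpmono : StrictMono p) (hqmono : StrictMono q)
    (hpq : ∀ i j, p i ≠ q j)
    (r : ℝ) (hr : 0 < r) (hri : ∀ k : ℕ, 1 ≤ k → k ≤ n - 1 → r ≠ (k : ℝ)) :
    (Matrix.of fun i j : Fin n => (p i ^ r - q j ^ r) / (p i - q j)).det ≠ 0 := by
  intro hdet
  obtain ⟨v, hv, hmv⟩ := Matrix.exists_mulVec_eq_zero_iff.mpr hdet
  obtain ⟨j0, hj0'⟩ := Function.ne_iff.mp hv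
  have hj0 : v j0 ≠ 0 := hj0' 
  have hn : 0 < n := j0.pos
  have hpqne : ∀ i j, p i - q j ≠ 0 := fun i j => sub_ne_zero.mpr (hpq i j)
  -- the polynomials
  set Qp : Fin n → Polynomial ℝ :=
    fun j => ∏ k ∈ Finset.univ.erase j, (X - C (q k)) with hQp
  set A : Polynomial ℝ := ∑ j, C (v j) * Qp j with hA
  set B : Polynomial ℝ := ∑ j, C (v j * q j ^ r) * Qp j with hB
  have hQdeg : ∀ j, (Qp j).natDegree ≤ n - 1 := by
    intro j
    refine le_trans (Polynomial.natDegree_prod_le _ _) ?_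
    have hb : ∀ k ∈ Finset.univ.erase j, (X - C (q k)).natDegree ≤ 1 :=
      fun k _ => le_of_eq (natDegree_X_sub_C (q k))
    calc ∑ k ∈ Finset.univ.erase j, (X - C (q k)).natDegree
        ≤ (Finset.univ.erase j).card • 1 := Finset.sum_le_card_nsmul _ _ 1 hb
      _ = n - 1 := by simp [Finset.card_erase_of_mem]
  have hAdeg : A.natDegree < n := by
    refine lt_of_le_of_lt (Polynomial.natDegree_sum_le_of_forall_le _ _
      (fun j _ => le_trans (natDegree_C_mul_le _ _) (hQdeg j))) ?_
    omega
  have hBdeg : B.natDegree < n := by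
    refine lt_of_le_of_lt (Polynomial.natDegree_sum_le_of_forall_le _ _
      (fun j _ => le_trans (natDegree_C_mul_le _ _) (hQdeg j))) ?_
    omega
  have hQeval : ∀ j x, (Qp j).eval x = ∏ k ∈ Finset.univ.erase j, (x - q k) := by
    intro j x; simp [hQp, Polynomial.eval_prod]
  have hAeval : ∀ x, A.eval x = ∑ j, v j * ∏ k ∈ Finset.univ.erase j, (x - q k) := by
    intro x; simp [hA, Polynomial.eval_finset_sum, hQeval]
  have hBeval : ∀ x, B.eval x = ∑ j, v j * q j ^ r * ∏ k ∈ Finset.univ.erase j, (x - q k) := by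
    intro x; simp [hB, Polynomial.eval_finset_sum, hQeval]
  set g : ℝ → ℝ := fun x => x ^ r * A.eval x - B.eval x with hg
  -- g vanishes at the q's
  have hgq : ∀ j, g (q j) = 0 := by
    intro j
    rw [hg]
    simp only [hAeval, hBeval, Finset.mul_sum]
    rw [← Finset.sum_sub_distrib]
    refine Finset.sum_eq_zero fun i _ => ?_
    by_cases hij : i = j
    · subst hij; ring
    · have h0 : ∏ k ∈ Finset.univ.erase i, (q j - q k) = 0 :=
        Finset.prod_eq_zero (Finset.mem_erase.mpr ⟨fun h => hij h.symm, Finset.mem_univ j⟩)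
          (by ring)
      rw [h0]; ring
  -- g vanishes at the p's
  have hgp : ∀ i, g (p i) = 0 := by
    intro i
    have hMi : ∑ j, (p i ^ r - q j ^ r) / (p i - q j) * v j = 0 := by
      have := congrFun hmv i
      simpa [Matrix.mulVec, dotProduct] using this
    rw [hg]
    simp only [hAeval, hBeval, Finset.mul_sum]
    rw [← Finset.sum_sub_distrib]
    have : ∀ j : Fin n, p i ^ r * (v j * ∏ k ∈ Finset.univ.erase j, (p i - q k))
        - v j * q j ^ r * ∏ k ∈ Finset.univ.erase j, (p i - q k)
        = (∏ k, (p i - q k)) * ((p i ^ r - q j ^ r) / (p i - q j) * v j) := by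
      intro j
      have hd := hpqne i j
      have hsplit : ∏ k, (p i - q k)
          = (p i - q j) * ∏ k ∈ Finset.univ.erase j, (p i - q k) :=
        (Finset.mul_prod_erase _ _ (Finset.mem_univ j)).symm
      have h2 : (p i ^ r - q j ^ r) / (p i - q j) * (p i - q j) = p i ^ r - q j ^ r :=
        div_mul_cancel₀ _ hd
      rw [hsplit]
      calc p i ^ r * (v j * ∏ k ∈ Finset.univ.erase j, (p i - q k))
          - v j * q j ^ r * ∏ k ∈ Finset.univ.erase j, (p i - q k)
          = ((p i ^ r - q j ^ r) / (p i - q j) * (p i - q j))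
            * (v j * ∏ k ∈ Finset.univ.erase j, (p i - q k)) := by rw [h2]; ring
        _ = (p i - q j) * (∏ k ∈ Finset.univ.erase j, (p i - q k))
            * ((p i ^ r - q j ^ r) / (p i - q j) * v j) := by ring
    rw [Finset.sum_congr rfl fun j _ => this j, ← Finset.mul_sum, hMi, mul_zero]
  -- the merged zero set
  have hinjp : Function.Injective p := hpmono.injective
  have hinjq : Function.Injective q := hqmono.injective
  set Z : Finset ℝ := (Finset.univ.image p) ∪ (Finset.univ.image q) with hZ
  have hdisj : Disjoint (Finset.univ.image p) (Finset.univ.image q) := by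
    rw [Finset.disjoint_left]
    rintro x hx hx'
    obtain ⟨i, _, rfl⟩ := Finset.mem_image.mp hx
    obtain ⟨j, _, hj⟩ := Finset.mem_image.mp hx'
    exact hpq i j hj.symm
  have hcard : Z.card = n + n := by
    rw [hZ, Finset.card_union_of_disjoint hdisj,
      Finset.card_image_of_injective _ hinjp, Finset.card_image_of_injective _ hinjq]
    simp
  set z : Fin (n + n) → ℝ := fun j => (Z.orderIsoOfFin hcard j : ℝ) with hz
  have hzmono : StrictMono z := fun a b hab =>
    Subtype.coe_lt_coe.mpr ((Z.orderIsoOfFin hcard).strictMono hab)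
  have hzmem : ∀ j, z j ∈ Z := fun j => (Z.orderIsoOfFin hcard j).2
  have hzcases : ∀ j, (∃ i, p i = z j) ∨ (∃ i, q i = z j) := by
    intro j
    have := hzmem j
    rw [hZ, Finset.mem_union] at this
    rcases this with h | h
    · obtain ⟨i, _, hi⟩ := Finset.mem_image.mp h; exact Or.inl ⟨i, hi⟩
    · obtain ⟨i, _, hi⟩ := Finset.mem_image.mp h; exact Or.inr ⟨i, hi⟩
  have hzpos : ∀ j, 0 < z j := by
    intro j
    rcases hzcases j with ⟨i, hi⟩ | ⟨i, hi⟩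
    · exact hi ▸ hp i
    · exact hi ▸ hq i
  have hgz : ∀ j, g (z j) = 0 := by
    intro j
    rcases hzcases j with ⟨i, hi⟩ | ⟨i, hi⟩
    · exact hi ▸ hgp i
    · exact hi ▸ hgq i
  -- Descartes data
  set c : Fin (n + n) → ℝ :=
    Fin.append (fun k : Fin n => A.coeff k.val) (fun k : Fin n => -(B.coeff k.val)) with hc
  set e : Fin (n + n) → ℝ :=
    Fin.append (fun k : Fin n => r + (k.val : ℝ)) (fun k : Fin n => (k.val : ℝ)) with he'
  have hmix : ∀ k k' : Fin n, r + (k.val : ℝ) ≠ (k'.val : ℝ) := by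
    intro k k' h
    have hklt : (k.val : ℝ) < (k'.val : ℝ) := by linarith
    have hklt' : k.val < k'.val := by exact_mod_cast hklt
    have h1 : 1 ≤ k'.val - k.val := by omega
    have h2 : k'.val - k.val ≤ n - 1 := by have := k'.isLt; omega
    refine hri (k'.val - k.val) h1 h2 ?_
    push_cast [Nat.cast_sub hklt'.le]
    linarith
  have he : Function.Injective e := by
    intro a b h
    rw [he'] at h
    induction a using Fin.addCases with
    | left k =>
      induction b using Fin.addCases with
      | left k' =>
        rw [Fin.append_left, Fin.append_left] at h
        congr 1
        have : (k.val : ℝ) = (k'.val : ℝ) := by linarith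
        exact Fin.ext (by exact_mod_cast this)
      | right k' =>
        rw [Fin.append_left, Fin.append_right] at h
        exact absurd h (hmix k k')
    | right k =>
      induction b using Fin.addCases with
      | left k' =>
        rw [Fin.append_right, Fin.append_left] at h
        exact absurd h.symm (hmix k' k)
      | right k' =>
        rw [Fin.append_right, Fin.append_right] at h
        congr 1
        exact Fin.ext (by exact_mod_cast h)
  have hsum : ∀ x : ℝ, 0 < x → ∑ i, c i * x ^ e i = g x := by
    intro x hx
    rw [hc, he', Fin.sum_univ_add]
    simp only [Fin.append_left, Fin.append_right]
    have h1 : ∀ k : Fin n, A.coeff k.val * x ^ (r + (k.val : ℝ))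
        = x ^ r * (A.coeff k.val * x ^ k.val) := by
      intro k
      rw [Real.rpow_add hx, Real.rpow_natCast]
      ring
    have h2 : ∀ k : Fin n, -(B.coeff k.val) * x ^ ((k.val : ℝ))
        = -(B.coeff k.val * x ^ k.val) := by
      intro k
      rw [Real.rpow_natCast]
      ring
    rw [Finset.sum_congr rfl fun k _ => h1 k, Finset.sum_congr rfl fun k _ => h2 k,
      ← Finset.mul_sum, Finset.sum_neg_distrib]
    have hAe : ∑ k : Fin n, A.coeff k.val * x ^ k.val = A.eval x := by
      rw [Polynomial.eval_eq_sum_range' hAdeg]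
      exact Fin.sum_univ_eq_sum_range (fun i => A.coeff i * x ^ i) n
    have hBe : ∑ k : Fin n, B.coeff k.val * x ^ k.val = B.eval x := by
      rw [Polynomial.eval_eq_sum_range' hBdeg]
      exact Fin.sum_univ_eq_sum_range (fun i => B.coeff i * x ^ i) n
    rw [hAe, hBe, hg]; ring
  have hczero : ∀ i, c i = 0 :=
    descartes (n + n) c e he z hzmono hzpos fun j => by
      rw [hsum (z j) (hzpos j)]; exact hgz j
  -- A is the zero polynomial
  have hA0 : A = 0 := by
    ext k
    rw [Polynomial.coeff_zero]
    by_cases hk : k < n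
    · have := hczero (Fin.castAdd n ⟨k, hk⟩)
      rwa [hc, Fin.append_left] at this
    · exact A.coeff_eq_zero_of_natDegree_lt (lt_of_lt_of_le hAdeg (not_lt.mp hk))
  -- hence v = 0, contradiction
  have : v j0 = 0 := by
    have h0 : A.eval (q j0) = 0 := by rw [hA0]; simp
    rw [hAeval] at h0
    have hterm : ∀ i ∈ Finset.univ, i ≠ j0 →
        v i * ∏ k ∈ Finset.univ.erase i, (q j0 - q k) = 0 := by
      intro i _ hij
      have h1 : ∏ k ∈ Finset.univ.erase i, (q j0 - q k) = 0 :=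
        Finset.prod_eq_zero (Finset.mem_erase.mpr ⟨fun h => hij h.symm, Finset.mem_univ j0⟩)
          (by ring)
      rw [h1, mul_zero]
    rw [Finset.sum_eq_single j0 hterm (by simp)] at h0
    have hne : ∏ k ∈ Finset.univ.erase j0, (q j0 - q k) ≠ 0 := by
      rw [Finset.prod_ne_zero_iff]
      intro k hk
      exact sub_ne_zero.mpr fun h => (Finset.mem_erase.mp hk).1 (hinjq h).symm
    exact (mul_eq_zero.mp h0).resolve_right hne
  exact hj0 this
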